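/- In G(m,p,n), a diagonal element of codimension 2 with non-1 eigenvalues ζ^c and ζ^{−c} (ζ = e^{2πi/m}) can be written as a product of two transposition-type reflections with codimensions adding; in particular it has reflection length 2. -/

import Mathlib

open Module Matrix

noncomputable section

/-- The primitive m-th root of unity e^{2πi/m}. -/
def zeta (m : ℕ) : ℂ := Complex.exp (2 * Real.pi * Complex.I / m)

/-- codim of a matrix: n minus the dimension of its fixed space. -/
def codimM {n : ℕ} (M : Matrix (Fin n) (Fin n) ℂ) : ℕ :=
  n - finrank ℂ (LinearMap.ker (M.mulVecLin - LinearMap.id))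

/-- Membership in the monomial reflection group G(m,p,n): a monomial matrix with
entries m-th roots of unity whose nonzero entries multiply to an (m/p)-th root of unity. -/
def InG (m p n : ℕ) (M : Matrix (Fin n) (Fin n) ℂ) : Prop :=
  ∃ (σ : Equiv.Perm (Fin n)) (d : Fin n → ℂ),
    (∀ j, d j ^ m = 1) ∧ ((∏ j, d j) ^ (m / p) = 1) ∧
    ∀ i j, M i j = if i = σ j then d j else 0

/-- A reflection of G(m,p,n): a nonidentity element of the group fixing a hyperplane
pointwise (i.e. of codimension one). -/
def IsReflM (m p n : ℕ) (M : Matrix (Fin n) (Fin n) ℂ) : Prop :=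
  InG m p n M ∧ M ≠ 1 ∧ codimM M = 1

/-- Reflection length in G(m,p,n). -/
def reflLenM (m p n : ℕ) (M : Matrix (Fin n) (Fin n) ℂ) : ℕ :=
  sInf {k | ∃ l : List (Matrix (Fin n) (Fin n) ℂ),
    (∀ s ∈ l, IsReflM m p n s) ∧ l.length = k ∧ l.prod = M}

/-- Transposition-type reflection: swaps coordinates i and j scaling by ζ^a and ζ^{-a}. -/
def IsTranspRefl (m n : ℕ) (M : Matrix (Fin n) (Fin n) ℂ) : Prop :=
  ∃ (i j : Fin n) (c : ℂ), i ≠ j ∧ c ^ m = 1 ∧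
    M = Matrix.of (fun k l =>
      if k = i ∧ l = j then c
      else if k = j ∧ l = i then c⁻¹
      else if k = l ∧ k ≠ i ∧ k ≠ j then 1 else 0)

/-- The codimension order relation on matrices. -/
def codimLeM {n : ℕ} (a c : Matrix (Fin n) (Fin n) ℂ) : Prop :=
  codimM a + codimM (a⁻¹ * c) = codimM c

/-! ### Auxiliary machinery -/

/-- A monomial matrix built from a permutation and a coefficient vector. -/
def monoMat {n : ℕ} (σ : Equiv.Perm (Fin n)) (d : Fin n → ℂ) : Matrix (Fin n) (Fin n) ℂ :=
  Matrix.of fun k l => if k = σ l then d l else 0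

lemma monoMat_mul {n : ℕ} (σ τ : Equiv.Perm (Fin n)) (d e : Fin n → ℂ) :
    monoMat σ d * monoMat τ e = monoMat (σ * τ) (fun l => d (τ l) * e l) := by
  ext k l
  simp only [monoMat, Matrix.mul_apply, Matrix.of_apply]
  rw [Finset.sum_eq_single (τ l)]
  · simp [Equiv.Perm.mul_apply, ite_mul]
    congr
  · intro b _ hb; simp [hb]
  · simp

lemma monoMat_mulVec {n : ℕ} (σ : Equiv.Perm (Fin n)) (d : Fin n → ℂ) (v : Fin n → ℂ) :
    (monoMat σ d).mulVec v = fun k => d (σ⁻¹ k) * v (σ⁻¹ k) := by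
  funext k
  simp only [monoMat, Matrix.mulVec, dotProduct, Matrix.of_apply]
  rw [Finset.sum_eq_single (σ⁻¹ k)]
  · simp
  · intro b _ hb
    have : k ≠ σ b := fun h => hb (by simp [h])
    simp [this]
  · simp

/-- The transposition-type reflection matrix. -/
def tmat {n : ℕ} (i j : Fin n) (a : ℂ) : Matrix (Fin n) (Fin n) ℂ :=
  Matrix.of (fun k l =>
      if k = i ∧ l = j then a
      else if k = j ∧ l = i then a⁻¹
      else if k = l ∧ k ≠ i ∧ k ≠ j then 1 else 0)

/-- The coefficient vector of a transposition-type reflection. -/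
def tds {n : ℕ} (i j : Fin n) (a : ℂ) : Fin n → ℂ :=
  fun l => if l = j then a else if l = i then a⁻¹ else 1

lemma tmat_eq_monoMat {n : ℕ} (i j : Fin n) (a : ℂ) (hij : i ≠ j) :
    tmat i j a = monoMat (Equiv.swap i j) (tds i j a) := by
  ext k l
  simp only [tmat, monoMat, tds, Matrix.of_apply]
  rcases eq_or_ne l i with rfl | hli
  · rw [Equiv.swap_apply_left]
    rcases eq_or_ne k j with rfl | hkj
    · simp [hij, hij.symm]
    · simp [hkj, hij.symm]
      intro h; simp [h] at hkj ⊢; tauto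
  · rcases eq_or_ne l j with rfl | hlj
    · rw [Equiv.swap_apply_right]
      rcases eq_or_ne k i with rfl | hki
      · simp [hij]
      · simp [hki, hij]
        intro h; simp [h] at hki; tauto
    · rw [Equiv.swap_apply_of_ne_of_ne hli hlj]
      rcases eq_or_ne k l with rfl | hkl
      · simp [hli, hlj]
      · simp [hkl, hli, hlj]

lemma mem_fixed_iff {n : ℕ} (M : Matrix (Fin n) (Fin n) ℂ) (v : Fin n → ℂ) :
    v ∈ LinearMap.ker (M.mulVecLin - LinearMap.id) ↔ M.mulVec v = v := by
  simp [LinearMap.mem_ker, sub_eq_zero]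

lemma codim_of_ker_eq {n k : ℕ} (M : Matrix (Fin n) (Fin n) ℂ)
    (f : (Fin n → ℂ) →ₗ[ℂ] (Fin k → ℂ))
    (hker : LinearMap.ker (M.mulVecLin - LinearMap.id) = LinearMap.ker f)
    (hsurj : Function.Surjective f) : codimM M = k := by
  unfold codimM
  rw [hker]
  have h1 := LinearMap.finrank_range_add_finrank_ker f
  rw [LinearMap.range_eq_top.mpr hsurj] at h1
  simp only [finrank_top] at h1
  have h2 : finrank ℂ (Fin k → ℂ) = k := by simp
  have h3 : finrank ℂ (Fin n → ℂ) = n := by simp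
  rw [h2, h3] at h1
  omega

lemma codim_tmat {n : ℕ} (i j : Fin n) (a : ℂ) (hij : i ≠ j) (ha : a ≠ 0) :
    codimM (tmat i j a) = 1 := by
  rw [tmat_eq_monoMat i j a hij]
  apply codim_of_ker_eq _ (LinearMap.pi (fun _ : Fin 1 => LinearMap.proj i - a • LinearMap.proj j))
  · ext v
    rw [mem_fixed_iff, monoMat_mulVec]
    simp only [LinearMap.mem_ker, LinearMap.pi_apply, LinearMap.sub_apply, LinearMap.smul_apply,
      LinearMap.proj_apply, smul_eq_mul]
    constructor
    · intro h
      have hi := congrFun h i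
      simp only [Equiv.swap_inv, Equiv.swap_apply_left, tds, if_pos rfl, if_true] at hi
      funext x
      simp only [LinearMap.pi_apply, LinearMap.sub_apply, LinearMap.smul_apply,
        LinearMap.proj_apply, smul_eq_mul, Pi.zero_apply]
      linear_combination -hi
    · intro h
      have h1 : v i - a * v j = 0 := congrFun h 0
      have hvi : v i = a * v j := by linear_combination h1
      funext k
      rcases eq_or_ne k i with rfl | hki
      · simp [tds, Equiv.swap_apply_left, hvi]
      · rcases eq_or_ne k j with rfl | hkj
        · simp only [Equiv.swap_inv, Equiv.swap_apply_right, tds, if_neg hij, if_pos rfl]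
          simp [hvi, ha]
        · rw [Equiv.swap_inv, Equiv.swap_apply_of_ne_of_ne hki hkj]
          simp [tds, hki, hkj]
  · intro w
    refine ⟨fun l => if l = i then w 0 else 0, ?_⟩
    funext x
    have : (0 : Fin 1) = x := Subsingleton.elim _ _
    simp [LinearMap.pi_apply, hij.symm, ← this]

lemma codim_diag2 {n : ℕ} (i j : Fin n) (hij : i ≠ j) (z : ℂ) (hz : z ≠ 1) :
    codimM (Matrix.diagonal (fun k : Fin n =>
      if k = i then z else if k = j then z⁻¹ else 1)) = 2 := by
  apply codim_of_ker_eq _ (LinearMap.pi ![LinearMap.proj i, LinearMap.proj j])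
  · ext v
    rw [mem_fixed_iff]
    simp only [LinearMap.mem_ker, LinearMap.pi_apply]
    constructor
    · intro h
      have hi := congrFun h i
      have hj := congrFun h j
      simp only [Matrix.mulVec_diagonal, if_pos rfl, if_neg hij.symm, if_neg hij,
        ite_true] at hi hj
      have hz' : z - 1 ≠ 0 := sub_ne_zero.mpr hz
      have hzi' : z⁻¹ - 1 ≠ 0 := sub_ne_zero.mpr (fun h => hz (inv_eq_one.mp h))
      have hvi : v i = 0 := by
        have : (z - 1) * v i = 0 := by linear_combination hi
        exact (mul_eq_zero.mp this).resolve_left hz'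
      have hvj : v j = 0 := by
        have : (z⁻¹ - 1) * v j = 0 := by linear_combination hj
        exact (mul_eq_zero.mp this).resolve_left hzi'
      funext x
      fin_cases x <;> simp [hvi, hvj]
    · intro h
      have hvi : v i = 0 := congrFun h 0
      have hvj : v j = 0 := congrFun h 1
      funext k
      rcases eq_or_ne k i with rfl | hki
      · simp [Matrix.mulVec_diagonal, hvi]
      · rcases eq_or_ne k j with rfl | hkj
        · simp [Matrix.mulVec_diagonal, hij.symm, hvj]
        · simp [Matrix.mulVec_diagonal, hki, hkj]
  · intro w
    refine ⟨fun l => if l = i then w 0 else if l = j then w 1 else 0, ?_⟩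
    funext x
    fin_cases x <;> simp [hij, hij.symm]

lemma tds_pow {m n : ℕ} (i j : Fin n) (a : ℂ) (ha : a ^ m = 1) (l : Fin n) :
    tds i j a l ^ m = 1 := by
  unfold tds
  split_ifs with h1 h2
  · exact ha
  · rw [inv_pow, ha, inv_one]
  · exact one_pow m

lemma tds_prod {n : ℕ} (i j : Fin n) (a : ℂ) (hij : i ≠ j) (ha : a ≠ 0) :
    (∏ l, tds i j a l) = 1 := by
  have : ∀ l, tds i j a l =
      (if l = j then a else 1) * (if l = i then a⁻¹ else 1) := by
    intro l
    unfold tds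
    split_ifs with h1 h2
    · subst h1; exact absurd h2 hij.symm
    · rw [mul_one]
    · rw [one_mul]
    · rw [mul_one]
  rw [Finset.prod_congr rfl (fun l _ => this l), Finset.prod_mul_distrib]
  simp [Finset.prod_ite_eq', mul_inv_cancel₀ ha]

lemma tmat_ne_one {n : ℕ} (i j : Fin n) (a : ℂ) (hij : i ≠ j) (ha : a ≠ 0) :
    tmat i j a ≠ 1 := by
  intro h
  have := congrFun (congrFun h i) j
  simp [tmat, Matrix.one_apply_ne hij] at this
  exact ha this

lemma isReflM_tmat {m p n : ℕ} (i j : Fin n) (a : ℂ) (hij : i ≠ j) (hm : 0 < m)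
    (ha : a ^ m = 1) : IsReflM m p n (tmat i j a) := by
  have ha0 : a ≠ 0 := by
    intro h; rw [h, zero_pow hm.ne'] at ha; exact zero_ne_one ha
  refine ⟨⟨Equiv.swap i j, tds i j a, tds_pow i j a ha, ?_, ?_⟩,
    tmat_ne_one i j a hij ha0, codim_tmat i j a hij ha0⟩
  · rw [tds_prod i j a hij ha0, one_pow]
  · intro k l
    have := congrFun (congrFun (tmat_eq_monoMat i j a hij) k) l
    simpa [monoMat] using this

lemma zeta_pow_m {m : ℕ} (hm : 0 < m) : zeta m ^ m = 1 := by
  unfold zeta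
  rw [← Complex.exp_nat_mul, mul_div_cancel₀, Complex.exp_two_pi_mul_I]
  exact_mod_cast Nat.cast_ne_zero.mpr hm.ne'

theorem diag_codim_two_det_one_factors (m p n : ℕ) (hm : 0 < m) (hp : p ∣ m)
    (i j : Fin n) (hij : i ≠ j) (c : ℕ) (hc : zeta m ^ c ≠ 1)
    (g : Matrix (Fin n) (Fin n) ℂ)
    (hg : g = Matrix.diagonal (fun k : Fin n =>
      if k = i then zeta m ^ c else if k = j then (zeta m ^ c)⁻¹ else 1)) :
    ∃ s t : Matrix (Fin n) (Fin n) ℂ,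
      IsTranspRefl m n s ∧ IsTranspRefl m n t ∧ g = s * t ∧
      codimM s + codimM t = codimM g ∧ reflLenM m p n g = 2 := by
  set z : ℂ := zeta m ^ c with hz
  have hzm : z ^ m = 1 := by
    rw [hz, ← pow_mul, mul_comm c m, pow_mul, zeta_pow_m hm, one_pow]
  have hz0 : z ≠ 0 := by
    intro h; rw [h, zero_pow hm.ne'] at hzm; exact zero_ne_one hzm
  have h1m : (1 : ℂ) ^ m = 1 := one_pow m
  refine ⟨tmat i j z, tmat i j 1, ⟨i, j, z, hij, hzm, rfl⟩, ⟨i, j, 1, hij, h1m, by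
    norm_num [tmat]⟩, ?_, ?_, ?_⟩
  · -- g = s * t
    rw [hg, tmat_eq_monoMat i j z hij, tmat_eq_monoMat i j 1 hij, monoMat_mul,
      Equiv.swap_mul_self]
    ext k l
    simp only [monoMat, Matrix.of_apply, Equiv.Perm.one_apply, Matrix.diagonal_apply]
    rcases eq_or_ne k l with rfl | hkl
    · simp only [if_pos rfl]
      rcases eq_or_ne k i with rfl | hki
      · simp [tds, Equiv.swap_apply_left, hij, hij.symm]
      · rcases eq_or_ne k j with rfl | hkj
        · simp [tds, Equiv.swap_apply_right, hij, hki]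
        · simp [tds, Equiv.swap_apply_of_ne_of_ne hki hkj, hki, hkj]
    · simp [hkl]
  · rw [codim_tmat i j z hij hz0, codim_tmat i j 1 hij one_ne_zero, hg,
      codim_diag2 i j hij z hc]
  · -- reflection length
    have hcodg : codimM g = 2 := by rw [hg]; exact codim_diag2 i j hij z hc
    have hprod : g = tmat i j z * tmat i j 1 := by
      rw [hg, tmat_eq_monoMat i j z hij, tmat_eq_monoMat i j 1 hij, monoMat_mul,
        Equiv.swap_mul_self]
      ext k l
      simp only [monoMat, Matrix.of_apply, Equiv.Perm.one_apply, Matrix.diagonal_apply]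
      rcases eq_or_ne k l with rfl | hkl
      · simp only [if_pos rfl]
        rcases eq_or_ne k i with rfl | hki
        · simp [tds, Equiv.swap_apply_left, hij, hij.symm]
        · rcases eq_or_ne k j with rfl | hkj
          · simp [tds, Equiv.swap_apply_right, hij, hki]
          · simp [tds, Equiv.swap_apply_of_ne_of_ne hki hkj, hki, hkj]
      · simp [hkl]
    have h2mem : 2 ∈ {k | ∃ l : List (Matrix (Fin n) (Fin n) ℂ),
        (∀ s ∈ l, IsReflM m p n s) ∧ l.length = k ∧ l.prod = g} := by
      refine ⟨[tmat i j z, tmat i j 1], ?_, rfl, ?_⟩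
      · intro s hs
        simp only [List.mem_cons, List.mem_singleton, List.not_mem_nil, or_false] at hs
        rcases hs with rfl | rfl
        · exact isReflM_tmat i j z hij hm hzm
        · exact isReflM_tmat i j 1 hij hm h1m
      · simp [hprod]
    have hg_ne_one : g ≠ 1 := by
      intro h
      have := congrFun (congrFun h i) i
      rw [hg] at this
      simp [Matrix.diagonal_apply, Matrix.one_apply_eq] at this
      exact hc this
    unfold reflLenM
    apply le_antisymm
    · exact Nat.sInf_le h2mem
    · by_contra hlt
      push_neg at hlt
      obtain ⟨l, hl, hlen, hlp⟩ := Nat.sInf_mem (⟨2, h2mem⟩ :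
        Set.Nonempty {k | ∃ l : List (Matrix (Fin n) (Fin n) ℂ),
          (∀ s ∈ l, IsReflM m p n s) ∧ l.length = k ∧ l.prod = g})
      have hlen2 : l.length < 2 := hlen ▸ hlt
      rcases l with _ | ⟨x, _ | ⟨y, t⟩⟩
      · simp only [List.prod_nil] at hlp
        exact hg_ne_one hlp.symm
      · simp only [List.prod_cons, List.prod_nil, mul_one] at hlp
        have hx := hl x (by simp)
        rw [hlp] at hx
        rw [hx.2.2] at hcodg
        exact absurd hcodg (by norm_num)
      · simp only [List.length_cons] at hlen2; omega
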